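/- For any real matrices A ∈ ℝ^{m×p}, B ∈ ℝ^{p×n}, any k ∈ [1, min{m,p,n}], and any s > 0, the ordered singular values satisfy ∑_{i=1}^k σ_i^s(AB) ≤ ∑_{i=1}^k (σ_i(A)σ_i(B))^s. -/

import Mathlib

open Matrix

/-- The `k`th multiplicative compound of a matrix: the matrix of all `k × k` minors,
indexed by the sets of `k` row indices and `k` column indices (taken in increasing order). -/
noncomputable def mulCompound (k : ℕ) {n m : ℕ} (A : Matrix (Fin n) (Fin m) ℝ) :
    Matrix {s : Finset (Fin n) // s.card = k} {s : Finset (Fin m) // s.card = k} ℝ :=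
  fun r c =>
    (A.submatrix (fun i => ((r.1.orderIsoOfFin r.2) i : Fin n))
      (fun j => ((c.1.orderIsoOfFin c.2) j : Fin m))).det

/-- The `k`th additive compound: the derivative at `ε = 0` of `(I + ε A)^{(k)}`. -/
noncomputable def addCompound (k : ℕ) {n : ℕ} (A : Matrix (Fin n) (Fin n) ℝ) :
    Matrix {s : Finset (Fin n) // s.card = k} {s : Finset (Fin n) // s.card = k} ℝ :=
  fun r c => deriv (fun ε : ℝ => mulCompound k (1 + ε • A) r c) 0

open scoped Classical in
/-- Eigenvalues of a symmetric real matrix, in decreasing order (junk value `0` otherwise). -/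
noncomputable def symEigsDesc {n : ℕ} (S : Matrix (Fin n) (Fin n) ℝ) : Fin n → ℝ :=
  if hS : S.IsHermitian then
    fun i => (hS.eigenvalues ∘ Tuple.sort hS.eigenvalues) i.rev
  else 0

/-- Singular values of a real matrix in decreasing order. -/
noncomputable def singVals {m p : ℕ} (A : Matrix (Fin m) (Fin p) ℝ) : Fin p → ℝ :=
  fun i => Real.sqrt (symEigsDesc (Aᴴ * A) i)

/-- Largest eigenvalue of a (symmetric) real matrix. -/
noncomputable def lamMax {n : ℕ} (S : Matrix (Fin n) (Fin n) ℝ) : ℝ :=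
  if hn : 0 < n then symEigsDesc S ⟨0, hn⟩ else 0


section CB
variable {j p : ℕ}

noncomputable def sel (T : {s : Finset (Fin p) // s.card = j}) : Fin j → Fin p :=
  fun a => ((T.1.orderIsoOfFin T.2) a : Fin p)

lemma sel_strictMono (T : {s : Finset (Fin p) // s.card = j}) : StrictMono (sel T) := by
  intro a b hab
  exact (T.1.orderIsoOfFin T.2).strictMono hab

lemma sel_inj (T : {s : Finset (Fin p) // s.card = j}) : Function.Injective (sel T) :=
  (sel_strictMono T).injective

lemma sel_mem (T : {s : Finset (Fin p) // s.card = j}) (a : Fin j) : sel T a ∈ T.1 :=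
  (T.1.orderIsoOfFin T.2 a).2

lemma image_sel (T : {s : Finset (Fin p) // s.card = j}) :
    Finset.image (sel T) Finset.univ = T.1 := by
  classical
  apply Finset.eq_of_subset_of_card_le
  · intro x hx
    simp only [Finset.mem_image] at hx
    obtain ⟨a, -, rfl⟩ := hx
    exact sel_mem T a
  · rw [Finset.card_image_of_injective _ (sel_inj T), Finset.card_univ, Fintype.card_fin, T.2]

lemma cauchy_binet (M : Matrix (Fin j) (Fin p) ℝ) (N : Matrix (Fin p) (Fin j) ℝ) :
    (M * N).det = ∑ T : {s : Finset (Fin p) // s.card = j},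
      (M.submatrix id (sel T)).det * (N.submatrix (sel T) id).det := by
  classical
  have h1 : (M * N).det
      = ∑ f : Fin j → Fin p, (∏ i, N (f i) i) * (M.submatrix id f).det := by
    rw [det_apply']
    have : ∀ σ : Equiv.Perm (Fin j), ∏ i, (M * N) (σ i) i
        = ∑ f : Fin j → Fin p, ∏ i, M (σ i) (f i) * N (f i) i := by
      intro σ
      simp only [Matrix.mul_apply]
      rw [Finset.prod_univ_sum]
      rw [Fintype.piFinset_univ]
    simp_rw [this, Finset.mul_sum]
    rw [Finset.sum_comm]
    refine Finset.sum_congr rfl fun f _ => ?_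
    rw [det_apply', Finset.mul_sum]
    refine Finset.sum_congr rfl fun σ _ => ?_
    simp only [Finset.prod_mul_distrib, Matrix.submatrix_apply, id_eq]
    ring
  rw [h1, ← Finset.sum_filter_add_sum_filter_not Finset.univ (fun f => Function.Injective f)]
  have h2 : ∑ f ∈ Finset.univ.filter (fun f : Fin j → Fin p => ¬ Function.Injective f),
      (∏ i, N (f i) i) * (M.submatrix id f).det = 0 := by
    refine Finset.sum_eq_zero fun f hf => ?_
    simp only [Finset.mem_filter] at hf
    obtain ⟨a, b, hab, hne⟩ := Function.not_injective_iff.mp hf.2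
    have : (M.submatrix id f).det = 0 :=
      Matrix.det_zero_of_column_eq hne (fun k => by simp [Matrix.submatrix_apply, hab])
    rw [this, mul_zero]
  rw [h2, add_zero]
  -- group by image
  have h3 := Finset.sum_fiberwise_of_maps_to
    (s := Finset.univ.filter (fun f : Fin j → Fin p => Function.Injective f))
    (t := (Finset.univ : Finset (Finset (Fin p))))
    (g := fun f => Finset.image f Finset.univ)
    (fun f _ => Finset.mem_univ _)
    (fun f => (∏ i, N (f i) i) * (M.submatrix id f).det)
  rw [← h3]
  -- outer sum: only card = j survives
  rw [← Finset.sum_filter_add_sum_filter_not Finset.univ (fun S : Finset (Fin p) => S.card = j)]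
  have h4 : ∑ S ∈ Finset.univ.filter (fun S : Finset (Fin p) => ¬ S.card = j),
      ∑ f ∈ (Finset.univ.filter (fun f : Fin j → Fin p => Function.Injective f)).filter
        (fun f => Finset.image f Finset.univ = S),
      (∏ i, N (f i) i) * (M.submatrix id f).det = 0 := by
    refine Finset.sum_eq_zero fun S hS => ?_
    simp only [Finset.mem_filter] at hS
    refine Finset.sum_eq_zero fun f hf => ?_
    simp only [Finset.mem_filter] at hf
    exfalso
    apply hS.2
    rw [← hf.2, Finset.card_image_of_injective _ hf.1.2, Finset.card_univ, Fintype.card_fin]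
  rw [h4, add_zero]
  rw [Finset.sum_subtype (p := fun S : Finset (Fin p) => S.card = j)
    (Finset.univ.filter (fun S : Finset (Fin p) => S.card = j)) (by intro x; simp)
    (fun S => ∑ f ∈ (Finset.univ.filter (fun f : Fin j → Fin p => Function.Injective f)).filter
        (fun f => Finset.image f Finset.univ = S),
      (∏ i, N (f i) i) * (M.submatrix id f).det)]
  refine Finset.sum_congr rfl fun T _ => ?_
  -- fiber over T equals sum over permutations
  have key : ∑ f ∈ (Finset.univ.filter (fun f : Fin j → Fin p => Function.Injective f)).filter
        (fun f => Finset.image f Finset.univ = T.1),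
      (∏ i, N (f i) i) * (M.submatrix id f).det
    = ∑ π : Equiv.Perm (Fin j),
        (∏ i, N (sel T (π i)) i) * ((Equiv.Perm.sign π : ℝ) * (M.submatrix id (sel T)).det) := by
    have genval : ∀ (f : Fin j → Fin p) (π : Equiv.Perm (Fin j)), sel T ∘ ⇑π = f →
        (∏ i, N (f i) i) * (M.submatrix id f).det
        = (∏ i, N (sel T (π i)) i)
            * ((Equiv.Perm.sign π : ℝ) * (M.submatrix id (sel T)).det) := by
      intro f π hcomp
      subst hcomp
      have : M.submatrix id (sel T ∘ ⇑π) = (M.submatrix id (sel T)).submatrix id ⇑π := rfl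
      rw [this, Matrix.det_permute']
      simp [Function.comp]
    refine Finset.sum_bij' (i := fun f hf => ?_) (j := fun π _ => sel T ∘ π) ?_ ?_ ?_ ?_ ?_
    · -- build the permutation from f
      refine Equiv.ofBijective (fun a => (T.1.orderIsoOfFin T.2).symm ⟨f a, ?_⟩) ?_
      · simp only [Finset.mem_filter] at hf
        rw [← hf.2]
        exact Finset.mem_image_of_mem f (Finset.mem_univ a)
      · rw [← Finite.injective_iff_bijective]
        intro a b hab
        simp only [Finset.mem_filter] at hf
        have := congrArg (T.1.orderIsoOfFin T.2) hab
        simp only [OrderIso.apply_symm_apply] at this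
        exact hf.1.2 (congrArg Subtype.val this)
    · intro a ha; exact Finset.mem_univ _
    · intro π _
      simp only [Finset.mem_filter]
      refine ⟨⟨Finset.mem_univ _, (sel_inj T).comp π.injective⟩, ?_⟩
      rw [← Finset.image_image, Finset.image_univ_of_surjective π.surjective]
      exact image_sel T
    · intro f hf
      funext a
      simp [sel, Equiv.ofBijective_apply, OrderIso.apply_symm_apply]
    · intro π _
      ext a
      have h5 : ((T.1.orderIsoOfFin T.2).symm
          ⟨(sel T ∘ ⇑π) a, sel_mem T (π a)⟩) = π a := by
        rw [OrderIso.symm_apply_eq]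
        exact Subtype.ext rfl
      exact congrArg _ h5
    · intro f hf
      exact genval f _ (by
        funext a
        simp [sel, Equiv.ofBijective_apply, OrderIso.apply_symm_apply])
  rw [key]
  have expand : ∑ π : Equiv.Perm (Fin j),
        (∏ i, N (sel T (π i)) i) * ((Equiv.Perm.sign π : ℝ) * (M.submatrix id (sel T)).det)
      = (M.submatrix id (sel T)).det *
        ∑ π : Equiv.Perm (Fin j), (Equiv.Perm.sign π : ℝ) * ∏ i, (N.submatrix (sel T) id) (π i) i := by
    rw [Finset.mul_sum]
    refine Finset.sum_congr rfl fun π _ => ?_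
    simp only [Matrix.submatrix_apply, id_eq]
    ring
  rw [expand, ← det_apply']

section Spec
variable {q : ℕ} {S : Matrix (Fin q) (Fin q) ℝ}

lemma symEigsDesc_eq (hS : S.IsHermitian) (i : Fin q) :
    symEigsDesc S i = hS.eigenvalues (Tuple.sort hS.eigenvalues i.rev) := by
  rw [symEigsDesc, dif_pos hS]
  rfl

lemma symEigsDesc_antitone (hS : S.IsHermitian) : Antitone (symEigsDesc S) := by
  intro i i' h
  rw [symEigsDesc_eq hS, symEigsDesc_eq hS]
  exact Tuple.monotone_sort hS.eigenvalues (Fin.rev_le_rev.mpr h)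

lemma symEigsDesc_nonneg (hS : S.PosSemidef) (i : Fin q) : 0 ≤ symEigsDesc S i := by
  rw [symEigsDesc_eq hS.1]
  exact hS.eigenvalues_nonneg _

lemma psd_det_nonneg (hS : S.PosSemidef) : 0 ≤ S.det := by
  rw [hS.1.det_eq_prod_eigenvalues]
  exact Finset.prod_nonneg fun i _ => hS.eigenvalues_nonneg i

end Spec

-- strictMono val bound
lemma strictMono_val_le {j p : ℕ} (g : Fin j → Fin p) (hg : StrictMono g) (a : Fin j) :
    (a : ℕ) ≤ (g a : ℕ) := by
  let g' : ℕ → ℕ := fun x => if h : x < j then (g ⟨x, h⟩ : ℕ) else x + p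
  have hg' : StrictMono g' := by
    intro x y hxy
    by_cases hx : x < j <;> by_cases hy : y < j
    · simp only [g', dif_pos hx, dif_pos hy]
      exact hg (show (⟨x, hx⟩ : Fin j) < ⟨y, hy⟩ from hxy)
    · simp only [g', dif_pos hx, dif_neg hy]
      exact lt_of_lt_of_le (g ⟨x, hx⟩).2 (by omega)
    · omega
    · simp only [g', dif_neg hx, dif_neg hy]
      omega
  have := hg'.le_apply (x := (a : ℕ))
  simpa [g', a.2] using this



section Main
open Finset

variable {q : ℕ}

-- subset product bounded by top-j product of descending eigenvalues
lemma prod_subset_le {S : Matrix (Fin q) (Fin q) ℝ} (hS : S.PosSemidef) {j : ℕ} (hjq : j ≤ q)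
    (T : {s : Finset (Fin q) // s.card = j}) :
    ∏ t ∈ T.1, hS.1.eigenvalues t ≤ ∏ i : Fin j, symEigsDesc S (Fin.castLE hjq i) := by
  classical
  have hval : ∀ t, hS.1.eigenvalues t
      = symEigsDesc S (((Tuple.sort hS.1.eigenvalues).symm t).rev) := by
    intro t
    rw [symEigsDesc_eq hS.1, Fin.rev_rev, Equiv.apply_symm_apply]
  have hinj : Function.Injective
      (fun t : Fin q => ((Tuple.sort hS.1.eigenvalues).symm t).rev) := by
    intro a b h
    exact (Tuple.sort hS.1.eigenvalues).symm.injective (Fin.rev_injective h)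
  set φ : Fin q → Fin q := fun t => ((Tuple.sort hS.1.eigenvalues).symm t).rev with hφ
  have h1 : ∏ t ∈ T.1, hS.1.eigenvalues t = ∏ u ∈ T.1.image φ, symEigsDesc S u := by
    rw [Finset.prod_image (fun a _ b _ h => hinj h)]
    exact Finset.prod_congr rfl fun t _ => hval t
  rw [h1]
  have hcard : (T.1.image φ).card = j := by
    rw [Finset.card_image_of_injective _ hinj, T.2]
  set T' : {s : Finset (Fin q) // s.card = j} := ⟨T.1.image φ, hcard⟩ with hT'
  have h2 : ∏ u ∈ T.1.image φ, symEigsDesc S u = ∏ i : Fin j, symEigsDesc S (sel T' i) := by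
    have hh : T.1.image φ = T'.1 := rfl
    rw [hh, ← image_sel T', Finset.prod_image (fun a _ b _ h => sel_inj T' h)]
  rw [h2]
  refine Finset.prod_le_prod (fun i _ => symEigsDesc_nonneg hS _) (fun i _ => ?_)
  refine symEigsDesc_antitone hS.1 ?_
  have := strictMono_val_le (sel T') (sel_strictMono T') i
  exact Fin.le_def.mpr (by simpa using this)

-- core: conjugation with diagonal
lemma det_conj_diag_le {j : ℕ} (w : Fin q → ℝ) (hw : ∀ t, 0 ≤ w t) (Λ : ℝ)
    (hsub : ∀ T : {s : Finset (Fin q) // s.card = j}, ∏ t ∈ T.1, w t ≤ Λ)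
    (V : Matrix (Fin q) (Fin j) ℝ) :
    (Vᵀ * diagonal w * V).det ≤ Λ * (Vᵀ * V).det := by
  classical
  rw [Matrix.mul_assoc, cauchy_binet Vᵀ (diagonal w * V), cauchy_binet Vᵀ V]
  have hterm : ∀ T : {s : Finset (Fin q) // s.card = j},
      ((Vᵀ).submatrix id (sel T)).det * ((diagonal w * V).submatrix (sel T) id).det
      = (∏ t ∈ T.1, w t) * ((V.submatrix (sel T) id).det * (V.submatrix (sel T) id).det) := by
    intro T
    have e1 : (Vᵀ).submatrix id (sel T) = (V.submatrix (sel T) id)ᵀ := by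
      ext a b; simp [Matrix.submatrix_apply]
    have e2 : (diagonal w * V).submatrix (sel T) id
        = diagonal (w ∘ sel T) * V.submatrix (sel T) id := by
      ext a b
      simp [Matrix.submatrix_apply, Matrix.diagonal_mul]
    have e3 : ∏ a : Fin j, w (sel T a) = ∏ t ∈ T.1, w t := by
      rw [← image_sel T, Finset.prod_image (fun a _ b _ h => sel_inj T h)]
    rw [e1, e2, Matrix.det_transpose, Matrix.det_mul, Matrix.det_diagonal]
    simp only [Function.comp]
    rw [e3]
    ring
  have hterm2 : ∀ T : {s : Finset (Fin q) // s.card = j},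
      ((Vᵀ).submatrix id (sel T)).det * ((V).submatrix (sel T) id).det
      = (V.submatrix (sel T) id).det * (V.submatrix (sel T) id).det := by
    intro T
    have e1 : (Vᵀ).submatrix id (sel T) = (V.submatrix (sel T) id)ᵀ := by
      ext a b; simp [Matrix.submatrix_apply]
    rw [e1, Matrix.det_transpose]
  calc ∑ T : {s : Finset (Fin q) // s.card = j},
        ((Vᵀ).submatrix id (sel T)).det * ((diagonal w * V).submatrix (sel T) id).det
      = ∑ T : {s : Finset (Fin q) // s.card = j},
        (∏ t ∈ T.1, w t) * ((V.submatrix (sel T) id).det * (V.submatrix (sel T) id).det) :=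
        Finset.sum_congr rfl fun T _ => hterm T
    _ ≤ ∑ T : {s : Finset (Fin q) // s.card = j},
        Λ * ((V.submatrix (sel T) id).det * (V.submatrix (sel T) id).det) := by
        refine Finset.sum_le_sum fun T _ => ?_
        exact mul_le_mul_of_nonneg_right (hsub T) (mul_self_nonneg _)
    _ = Λ * ∑ T : {s : Finset (Fin q) // s.card = j},
        ((Vᵀ).submatrix id (sel T)).det * ((V).submatrix (sel T) id).det := by
        rw [Finset.mul_sum]
        exact Finset.sum_congr rfl fun T _ => by rw [hterm2 T]

-- upper bound lemma
lemma detU {S : Matrix (Fin q) (Fin q) ℝ} (hS : S.PosSemidef) {j : ℕ} (hjq : j ≤ q)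
    (W : Matrix (Fin q) (Fin j) ℝ) :
    (Wᵀ * S * W).det ≤ (∏ i : Fin j, symEigsDesc S (Fin.castLE hjq i)) * (Wᵀ * W).det := by
  classical
  set U : Matrix (Fin q) (Fin q) ℝ := (hS.1.eigenvectorUnitary : Matrix (Fin q) (Fin q) ℝ) with hU
  have hU1 : Uᵀ * U = 1 := by
    have := (Matrix.mem_unitaryGroup_iff'.mp hS.1.eigenvectorUnitary.2)
    simpa [Matrix.star_eq_conjTranspose, Matrix.conjTranspose_eq_transpose_of_trivial] using this
  have hU2 : U * Uᵀ = 1 := by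
    have := (Matrix.mem_unitaryGroup_iff.mp hS.1.eigenvectorUnitary.2)
    simpa [Matrix.star_eq_conjTranspose, Matrix.conjTranspose_eq_transpose_of_trivial] using this
  have hdiag : Uᵀ * S * U = diagonal hS.1.eigenvalues := by
    have := hS.1.conjStarAlgAut_star_eigenvectorUnitary
    simpa [Unitary.conjStarAlgAut_star_apply, Matrix.star_eq_conjTranspose, Matrix.conjTranspose_eq_transpose_of_trivial] using this
  set V : Matrix (Fin q) (Fin j) ℝ := Uᵀ * W with hV
  have e1 : Wᵀ * S * W = Vᵀ * diagonal hS.1.eigenvalues * V := by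
    rw [hV, Matrix.transpose_mul, Matrix.transpose_transpose, ← hdiag]
    simp only [Matrix.mul_assoc]
    rw [← Matrix.mul_assoc U Uᵀ, hU2, Matrix.one_mul, ← Matrix.mul_assoc U Uᵀ, hU2,
      Matrix.one_mul]
  have e2 : Wᵀ * W = Vᵀ * V := by
    rw [hV, Matrix.transpose_mul, Matrix.transpose_transpose]
    rw [Matrix.mul_assoc, ← Matrix.mul_assoc U Uᵀ W, hU2, Matrix.one_mul]
  rw [e1, e2]
  exact det_conj_diag_le hS.1.eigenvalues (fun t => hS.eigenvalues_nonneg t) _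
    (fun T => prod_subset_le hS hjq T) V

-- attainment lemma
lemma detE {S : Matrix (Fin q) (Fin q) ℝ} (hS : S.IsHermitian) {j : ℕ} (hjq : j ≤ q) :
    ∃ W : Matrix (Fin q) (Fin j) ℝ, Wᵀ * W = 1 ∧
      Wᵀ * S * W = diagonal (fun i : Fin j => symEigsDesc S (Fin.castLE hjq i)) := by
  classical
  set U : Matrix (Fin q) (Fin q) ℝ := (hS.eigenvectorUnitary : Matrix (Fin q) (Fin q) ℝ) with hU
  have hU1 : Uᵀ * U = 1 := by
    have := (Matrix.mem_unitaryGroup_iff'.mp hS.eigenvectorUnitary.2)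
    simpa [Matrix.star_eq_conjTranspose, Matrix.conjTranspose_eq_transpose_of_trivial] using this
  have hdiag : Uᵀ * S * U = diagonal hS.eigenvalues := by
    have := hS.conjStarAlgAut_star_eigenvectorUnitary
    simpa [Unitary.conjStarAlgAut_star_apply, Matrix.star_eq_conjTranspose, Matrix.conjTranspose_eq_transpose_of_trivial] using this
  set c : Fin j → Fin q := fun i => Tuple.sort hS.eigenvalues (Fin.castLE hjq i).rev with hc
  have hcinj : Function.Injective c := by
    intro a b h
    have := (Tuple.sort hS.eigenvalues).injective h
    have := Fin.rev_injective this
    exact Fin.castLE_injective hjq this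
  refine ⟨U.submatrix id c, ?_, ?_⟩
  · ext i i'
    have h1 : (U.submatrix id c)ᵀ * (U.submatrix id c) = (Uᵀ * U).submatrix c c := by
      ext a b
      simp [Matrix.mul_apply, Matrix.submatrix_apply]
    rw [h1, hU1]
    simp only [Matrix.submatrix_apply, Matrix.one_apply]
    by_cases h : i = i'
    · simp [h]
    · rw [if_neg (fun hcc => h (hcinj hcc)), if_neg h]
  · ext i i'
    have h1 : (U.submatrix id c)ᵀ * S * (U.submatrix id c) = (Uᵀ * S * U).submatrix c c := by
      ext a b
      simp only [Matrix.mul_apply, Matrix.submatrix_apply, Matrix.transpose_apply, id_eq,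
        Finset.sum_mul]
      try rw [Finset.sum_comm]
    rw [h1, hdiag]
    simp only [Matrix.submatrix_apply, Matrix.diagonal_apply]
    by_cases h : i = i'
    · subst h
      rw [if_pos rfl, if_pos rfl, symEigsDesc_eq hS]
    · rw [if_neg (fun hcc => h (hcinj hcc)), if_neg h]

end Main



section SingV
open Finset

lemma singVals_nonneg {m p : ℕ} (M : Matrix (Fin m) (Fin p) ℝ) (i : Fin p) :
    0 ≤ singVals M i := Real.sqrt_nonneg _

lemma singVals_sq {m p : ℕ} (M : Matrix (Fin m) (Fin p) ℝ) (i : Fin p) :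
    singVals M i ^ 2 = symEigsDesc (Mᴴ * M) i :=
  Real.sq_sqrt (symEigsDesc_nonneg (Matrix.posSemidef_conjTranspose_mul_self M) i)

lemma singVals_antitone {m p : ℕ} (M : Matrix (Fin m) (Fin p) ℝ) : Antitone (singVals M) :=
  fun _ _ h => Real.sqrt_le_sqrt
    (symEigsDesc_antitone (Matrix.posSemidef_conjTranspose_mul_self M).1 h)

/-- Log-majorization (Horn): products of top-`j` singular values. -/
lemma logMaj {m p n j : ℕ} (hjp : j ≤ p) (hjn : j ≤ n)
    (A : Matrix (Fin m) (Fin p) ℝ) (B : Matrix (Fin p) (Fin n) ℝ) :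
    ∏ i : Fin j, singVals (A * B) (Fin.castLE hjn i) ≤
      ∏ i : Fin j, singVals A (Fin.castLE hjp i) * singVals B (Fin.castLE hjn i) := by
  classical
  have hPSDAB := Matrix.posSemidef_conjTranspose_mul_self (A * B)
  have hPSDA := Matrix.posSemidef_conjTranspose_mul_self A
  have hPSDB := Matrix.posSemidef_conjTranspose_mul_self B
  obtain ⟨W, hW1, hW2⟩ := detE hPSDAB.1 hjn
  have h0 : (∏ i : Fin j, singVals (A * B) (Fin.castLE hjn i)) ^ 2
      = ∏ i : Fin j, symEigsDesc ((A * B)ᴴ * (A * B)) (Fin.castLE hjn i) := by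
    rw [← Finset.prod_pow]
    exact Finset.prod_congr rfl fun i _ => singVals_sq _ _
  have h1 : ∏ i : Fin j, symEigsDesc ((A * B)ᴴ * (A * B)) (Fin.castLE hjn i)
      = (Wᵀ * ((A * B)ᴴ * (A * B)) * W).det := by
    rw [hW2, Matrix.det_diagonal]
  have hform : Wᵀ * ((A * B)ᴴ * (A * B)) * W = (B * W)ᵀ * (Aᴴ * A) * (B * W) := by
    simp only [Matrix.conjTranspose_eq_transpose_of_trivial, Matrix.transpose_mul,
      Matrix.mul_assoc]
  have hform2 : (B * W)ᵀ * (B * W) = Wᵀ * (Bᴴ * B) * W := by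
    simp only [Matrix.conjTranspose_eq_transpose_of_trivial, Matrix.transpose_mul,
      Matrix.mul_assoc]
  have hDet1 := detU hPSDA hjp (B * W)
  have hDet2 := detU hPSDB hjn W
  rw [hform2] at hDet1
  rw [hW1, Matrix.det_one, mul_one] at hDet2
  have hgram : 0 ≤ (Wᵀ * (Bᴴ * B) * W).det := by
    have := Matrix.posSemidef_conjTranspose_mul_self (B * W)
    have h := psd_det_nonneg this
    have e : (B * W)ᴴ * (B * W) = Wᵀ * (Bᴴ * B) * W := by
      simp only [Matrix.conjTranspose_eq_transpose_of_trivial, Matrix.transpose_mul,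
        Matrix.mul_assoc]
    rwa [e] at h
  have hprodA : 0 ≤ ∏ i : Fin j, symEigsDesc (Aᴴ * A) (Fin.castLE hjp i) :=
    Finset.prod_nonneg fun i _ => symEigsDesc_nonneg hPSDA _
  have hsq : (∏ i : Fin j, singVals (A * B) (Fin.castLE hjn i)) ^ 2
      ≤ (∏ i : Fin j, singVals A (Fin.castLE hjp i) * singVals B (Fin.castLE hjn i)) ^ 2 := by
    have hR : (∏ i : Fin j, singVals A (Fin.castLE hjp i) * singVals B (Fin.castLE hjn i)) ^ 2
        = (∏ i : Fin j, symEigsDesc (Aᴴ * A) (Fin.castLE hjp i))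
          * (∏ i : Fin j, symEigsDesc (Bᴴ * B) (Fin.castLE hjn i)) := by
      rw [← Finset.prod_pow, ← Finset.prod_mul_distrib]
      refine Finset.prod_congr rfl fun i _ => ?_
      rw [mul_pow, singVals_sq, singVals_sq]
    rw [h0, h1, hform, hR]
    calc ((B * W)ᵀ * (Aᴴ * A) * (B * W)).det
        ≤ (∏ i : Fin j, symEigsDesc (Aᴴ * A) (Fin.castLE hjp i))
          * (Wᵀ * (Bᴴ * B) * W).det := hDet1
      _ ≤ (∏ i : Fin j, symEigsDesc (Aᴴ * A) (Fin.castLE hjp i))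
          * (∏ i : Fin j, symEigsDesc (Bᴴ * B) (Fin.castLE hjn i)) :=
        mul_le_mul_of_nonneg_left hDet2 hprodA
  have hLnn : 0 ≤ ∏ i : Fin j, singVals (A * B) (Fin.castLE hjn i) :=
    Finset.prod_nonneg fun i _ => singVals_nonneg _ _
  have hRnn : 0 ≤ ∏ i : Fin j, singVals A (Fin.castLE hjp i) * singVals B (Fin.castLE hjn i) :=
    Finset.prod_nonneg fun i _ => mul_nonneg (singVals_nonneg _ _) (singVals_nonneg _ _)
  calc ∏ i : Fin j, singVals (A * B) (Fin.castLE hjn i)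
      = Real.sqrt ((∏ i : Fin j, singVals (A * B) (Fin.castLE hjn i)) ^ 2) :=
        (Real.sqrt_sq hLnn).symm
    _ ≤ Real.sqrt ((∏ i : Fin j, singVals A (Fin.castLE hjp i)
          * singVals B (Fin.castLE hjn i)) ^ 2) := Real.sqrt_le_sqrt hsq
    _ = _ := Real.sqrt_sq hRnn

end SingV

section Weyl
open Finset

lemma abel_nonpos : ∀ (k : ℕ) (c d : ℕ → ℝ), (∀ i, i < k → 0 ≤ c i) →
    (∀ i j, i ≤ j → j < k → c j ≤ c i) →
    (∀ j, j ≤ k → ∑ i ∈ Finset.range j, d i ≤ 0) →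
    ∑ i ∈ Finset.range k, c i * d i ≤ 0 := by
  intro k
  induction k with
  | zero => simp
  | succ k ih =>
    intro c d hc ha hd
    have key : ∑ i ∈ range (k+1), c i * d i
        = ∑ i ∈ range (k+1), (c i - c k) * d i + c k * ∑ i ∈ range (k+1), d i := by
      rw [Finset.mul_sum, ← Finset.sum_add_distrib]
      exact Finset.sum_congr rfl fun i _ => by ring
    have h2 : c k * ∑ i ∈ range (k+1), d i ≤ 0 := by
      have := mul_le_mul_of_nonneg_left (hd (k+1) le_rfl) (hc k (Nat.lt_succ_self k))
      simpa using this
    have h1 : ∑ i ∈ range (k+1), (c i - c k) * d i = ∑ i ∈ range k, (c i - c k) * d i := by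
      rw [Finset.sum_range_succ]
      simp
    have h3 : ∑ i ∈ range k, (c i - c k) * d i ≤ 0 := by
      refine ih (fun i => c i - c k) d ?_ ?_ ?_
      · intro i hi
        have := ha i k (Nat.le_of_lt hi) (Nat.lt_succ_self k)
        show (0:ℝ) ≤ c i - c k
        linarith
      · intro i i' hii hik
        have h5 := ha i i' hii (Nat.lt_succ_of_lt hik)
        show c i' - c k ≤ c i - c k
        linarith
      · intro j' hj'
        exact hd j' (Nat.le_succ_of_le hj')
    linarith [key]

lemma exp_sub_exp (a b : ℝ) : Real.exp a - Real.exp b ≤ Real.exp a * (a - b) := by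
  have h := Real.add_one_le_exp (b - a)
  have h2 : Real.exp a * (b - a + 1) ≤ Real.exp a * Real.exp (b - a) :=
    mul_le_mul_of_nonneg_left h (Real.exp_pos a).le
  have h3 : Real.exp a * Real.exp (b - a) = Real.exp b := by
    rw [← Real.exp_add]
    ring_nf
  rw [h3] at h2
  nlinarith

lemma weylPos (k : ℕ) (x y : ℕ → ℝ) (hx : ∀ i < k, 0 < x i) (hy : ∀ i < k, 0 < y i)
    (hxa : ∀ i j, i ≤ j → j < k → x j ≤ x i)
    (hprod : ∀ j ≤ k, ∏ i ∈ range j, x i ≤ ∏ i ∈ range j, y i) :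
    ∑ i ∈ range k, x i ≤ ∑ i ∈ range k, y i := by
  set a : ℕ → ℝ := fun i => Real.log (x i) with hadef
  set b : ℕ → ℝ := fun i => Real.log (y i) with hbdef
  have hsum : ∀ j, j ≤ k → ∑ i ∈ range j, (a i - b i) ≤ 0 := by
    intro j hj
    rw [Finset.sum_sub_distrib]
    have hlx : ∑ i ∈ range j, a i = Real.log (∏ i ∈ range j, x i) :=
      (Real.log_prod (fun i hi =>
        ne_of_gt (hx i (lt_of_lt_of_le (mem_range.mp hi) hj)))).symm
    have hly : ∑ i ∈ range j, b i = Real.log (∏ i ∈ range j, y i) :=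
      (Real.log_prod (fun i hi =>
        ne_of_gt (hy i (lt_of_lt_of_le (mem_range.mp hi) hj)))).symm
    rw [hlx, hly, sub_nonpos]
    exact Real.log_le_log
      (Finset.prod_pos fun i hi => hx i (lt_of_lt_of_le (mem_range.mp hi) hj)) (hprod j hj)
  have hterm : ∀ i, i < k → x i - y i ≤ x i * (a i - b i) := by
    intro i hi
    have hxe : Real.exp (a i) = x i := Real.exp_log (hx i hi)
    have hye : Real.exp (b i) = y i := Real.exp_log (hy i hi)
    have := exp_sub_exp (a i) (b i)
    rw [hxe, hye] at this
    exact this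
  have habel := abel_nonpos k x (fun i => a i - b i)
    (fun i hi => (hx i hi).le) hxa hsum
  have hstep : ∑ i ∈ range k, (x i - y i) ≤ ∑ i ∈ range k, x i * (a i - b i) :=
    Finset.sum_le_sum fun i hi => hterm i (mem_range.mp hi)
  rw [Finset.sum_sub_distrib] at hstep
  linarith

lemma weylPosY (k : ℕ) (x y : ℕ → ℝ) (hx0 : ∀ i < k, 0 ≤ x i) (hy : ∀ i < k, 0 < y i)
    (hxa : ∀ i j, i ≤ j → j < k → x j ≤ x i)
    (hprod : ∀ j ≤ k, ∏ i ∈ range j, x i ≤ ∏ i ∈ range j, y i) :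
    ∑ i ∈ range k, x i ≤ ∑ i ∈ range k, y i := by
  classical
  by_cases hxpos : ∀ i < k, 0 < x i
  · exact weylPos k x y hxpos hy hxa hprod
  · push_neg at hxpos
    obtain ⟨i0, hi0k, hi0⟩ := hxpos
    have hex : ∃ i, i < k ∧ x i = 0 := ⟨i0, hi0k, le_antisymm hi0 (hx0 i0 hi0k)⟩
    set r := Nat.find hex with hr
    obtain ⟨hrk, hxr⟩ := Nat.find_spec hex
    have hposlt : ∀ i < r, 0 < x i := by
      intro i hi
      have := Nat.find_min hex hi
      push_neg at this
      rcases lt_or_ge i k with h | h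
      · exact lt_of_le_of_ne (hx0 i h) (fun e => (this h) e.symm)
      · omega
    have hzero : ∀ i, r ≤ i → i < k → x i = 0 := by
      intro i hri hik
      have h1 := hxa r i hri hik
      have h2 := hx0 i hik
      linarith [hxr]
    have hsumx : ∑ i ∈ range k, x i = ∑ i ∈ range r, x i := by
      rw [← Finset.sum_range_add_sum_Ico x (le_of_lt hrk)]
      have : ∑ i ∈ Finset.Ico r k, x i = 0 :=
        Finset.sum_eq_zero fun i hi => hzero i (Finset.mem_Ico.mp hi).1 (Finset.mem_Ico.mp hi).2
      rw [this, add_zero]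
    have hsy : ∑ i ∈ range r, y i ≤ ∑ i ∈ range k, y i := by
      rw [← Finset.sum_range_add_sum_Ico y (le_of_lt hrk)]
      have : 0 ≤ ∑ i ∈ Finset.Ico r k, y i :=
        Finset.sum_nonneg fun i hi => (hy i (Finset.mem_Ico.mp hi).2).le
      linarith
    have hmain : ∑ i ∈ range r, x i ≤ ∑ i ∈ range r, y i := by
      refine weylPos r x y (fun i hi => hposlt i hi) (fun i hi => hy i (hi.trans hrk)) ?_ ?_
      · intro i i' h1 h2
        exact hxa i i' h1 (h2.trans hrk)
      · intro j' hj'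
        exact hprod j' (hj'.trans hrk.le)
    rw [hsumx]
    linarith

lemma weylFull (k : ℕ) (x y : ℕ → ℝ) (hx0 : ∀ i < k, 0 ≤ x i) (hy0 : ∀ i < k, 0 ≤ y i)
    (hxa : ∀ i j, i ≤ j → j < k → x j ≤ x i)
    (hprod : ∀ j ≤ k, ∏ i ∈ range j, x i ≤ ∏ i ∈ range j, y i) :
    ∑ i ∈ range k, x i ≤ ∑ i ∈ range k, y i := by
  classical
  by_cases hy : ∀ i < k, 0 < y i
  · exact weylPosY k x y hx0 hy hxa hprod
  · push_neg at hy
    obtain ⟨i0, hi0k, hi0⟩ := hy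
    have hey : ∃ i, i < k ∧ y i = 0 := ⟨i0, hi0k, le_antisymm hi0 (hy0 i0 hi0k)⟩
    set r := Nat.find hey with hr
    obtain ⟨hrk, hyr⟩ := Nat.find_spec hey
    have hyposlt : ∀ i < r, 0 < y i := by
      intro i hi
      have := Nat.find_min hey hi
      push_neg at this
      rcases lt_or_ge i k with h | h
      · exact lt_of_le_of_ne (hy0 i h) (fun e => (this h) e.symm)
      · omega
    -- x r must be zero
    have hxr : x r = 0 := by
      by_contra hne
      have hxrpos : 0 < x r := lt_of_le_of_ne (hx0 r hrk) (Ne.symm hne)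
      have hxpos : ∀ i ∈ range (r+1), 0 < x i := by
        intro i hi
        have hik : i < k := lt_of_lt_of_le (mem_range.mp hi) hrk
        exact lt_of_lt_of_le hxrpos (hxa i r (Nat.lt_succ_iff.mp (mem_range.mp hi)) hrk)
      have hppos : 0 < ∏ i ∈ range (r+1), x i := Finset.prod_pos hxpos
      have hpzero : ∏ i ∈ range (r+1), y i = 0 :=
        Finset.prod_eq_zero (mem_range.mpr (Nat.lt_succ_self r)) hyr
      have := hprod (r+1) hrk
      rw [hpzero] at this
      linarith
    have hzero : ∀ i, r ≤ i → i < k → x i = 0 := by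
      intro i hri hik
      have h1 := hxa r i hri hik
      have h2 := hx0 i hik
      linarith [hxr]
    have hsumx : ∑ i ∈ range k, x i = ∑ i ∈ range r, x i := by
      rw [← Finset.sum_range_add_sum_Ico x (le_of_lt hrk)]
      have : ∑ i ∈ Finset.Ico r k, x i = 0 :=
        Finset.sum_eq_zero fun i hi => hzero i (Finset.mem_Ico.mp hi).1 (Finset.mem_Ico.mp hi).2
      rw [this, add_zero]
    have hsy : ∑ i ∈ range r, y i ≤ ∑ i ∈ range k, y i := by
      rw [← Finset.sum_range_add_sum_Ico y (le_of_lt hrk)]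
      have : 0 ≤ ∑ i ∈ Finset.Ico r k, y i :=
        Finset.sum_nonneg fun i hi => hy0 i (Finset.mem_Ico.mp hi).2
      linarith
    have hmain : ∑ i ∈ range r, x i ≤ ∑ i ∈ range r, y i := by
      refine weylPosY r x y (fun i hi => hx0 i (hi.trans hrk)) hyposlt ?_ ?_
      · intro i i' h1 h2
        exact hxa i i' h1 (h2.trans hrk)
      · intro j' hj'
        exact hprod j' (hj'.trans hrk.le)
    rw [hsumx]
    linarith

end Weyl

/-- Horn-type inequality: `∑_{i=1}^k σ_i^s(AB) ≤ ∑_{i=1}^k (σ_i(A) σ_i(B))^s`. -/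
theorem stmt15 {m p n k : ℕ} (hk1 : 1 ≤ k) (hkm : k ≤ m) (hkp : k ≤ p) (hkn : k ≤ n)
    (A : Matrix (Fin m) (Fin p) ℝ) (B : Matrix (Fin p) (Fin n) ℝ) (s : ℝ) (hs : 0 < s) :
    ∑ i : Fin k, (singVals (A * B) (Fin.castLE hkn i)) ^ s ≤
      ∑ i : Fin k, (singVals A (Fin.castLE hkp i) * singVals B (Fin.castLE hkn i)) ^ s := by
  classical
  set x : ℕ → ℝ := fun i =>
    if h : i < k then (singVals (A * B) (Fin.castLE hkn ⟨i, h⟩)) ^ s else 0 with hxdef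
  set y : ℕ → ℝ := fun i =>
    if h : i < k then
      (singVals A (Fin.castLE hkp ⟨i, h⟩) * singVals B (Fin.castLE hkn ⟨i, h⟩)) ^ s
    else 0 with hydef
  have hgoalx : ∑ i : Fin k, (singVals (A * B) (Fin.castLE hkn i)) ^ s
      = ∑ i ∈ Finset.range k, x i := by
    rw [← Fin.sum_univ_eq_sum_range x k]
    refine Finset.sum_congr rfl fun i _ => ?_
    simp only [hxdef]
    rw [dif_pos i.isLt]
  have hgoaly : ∑ i : Fin k, (singVals A (Fin.castLE hkp i) * singVals B (Fin.castLE hkn i)) ^ s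
      = ∑ i ∈ Finset.range k, y i := by
    rw [← Fin.sum_univ_eq_sum_range y k]
    refine Finset.sum_congr rfl fun i _ => ?_
    simp only [hydef]
    rw [dif_pos i.isLt]
  rw [hgoalx, hgoaly]
  refine weylFull k x y ?_ ?_ ?_ ?_
  · intro i hi
    simp only [hxdef]
    rw [dif_pos hi]
    exact Real.rpow_nonneg (singVals_nonneg _ _) s
  · intro i hi
    simp only [hydef]
    rw [dif_pos hi]
    exact Real.rpow_nonneg (mul_nonneg (singVals_nonneg _ _) (singVals_nonneg _ _)) s
  · intro i j hij hjk
    have hik : i < k := lt_of_le_of_lt hij hjk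
    simp only [hxdef]
    rw [dif_pos hjk, dif_pos hik]
    refine Real.rpow_le_rpow (singVals_nonneg _ _) ?_ hs.le
    refine singVals_antitone (A * B) ?_
    exact Fin.mk_le_mk.mpr hij
  · intro j hj
    have hjn : j ≤ n := hj.trans hkn
    have hjp : j ≤ p := hj.trans hkp
    have hx' : ∏ i ∈ Finset.range j, x i
        = (∏ i : Fin j, singVals (A * B) (Fin.castLE hjn i)) ^ s := by
      rw [← Fin.prod_univ_eq_prod_range x j]
      rw [← Real.finset_prod_rpow _ _ (fun i _ => singVals_nonneg _ _) s]
      refine Finset.prod_congr rfl fun i _ => ?_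
      simp only [hxdef]
      rw [dif_pos (lt_of_lt_of_le i.isLt hj)]
      rfl
    have hy' : ∏ i ∈ Finset.range j, y i
        = (∏ i : Fin j, singVals A (Fin.castLE hjp i) * singVals B (Fin.castLE hjn i)) ^ s := by
      rw [← Fin.prod_univ_eq_prod_range y j]
      rw [← Real.finset_prod_rpow _ _
        (fun i _ => mul_nonneg (singVals_nonneg _ _) (singVals_nonneg _ _)) s]
      refine Finset.prod_congr rfl fun i _ => ?_
      simp only [hydef]
      rw [dif_pos (lt_of_lt_of_le i.isLt hj)]
      rfl
    rw [hx', hy']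
    exact Real.rpow_le_rpow
      (Finset.prod_nonneg fun i _ => singVals_nonneg _ _) (logMaj hjp hjn A B) hs.le
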